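/- arXiv:2410.03477 — 3 statements merged into one kernel-verified Lean document; each statement's English description precedes it below -/
import Mathlib

section
/- For R ∈ ℕ, define nn(x) = (x+R)₊ - (x-R)₊ + 2·∑_{k=1}^{2R} [(x + R + 1/4 - k)₊ - (x + R + 3/4 - k)₊], where (t)₊ = max(t, 0). Then nn(x) = φ(x)·𝟙{x ∈ [-R, R]} for all real x, where φ(x) = |x - 3/4 - ⌊x - 1/4⌋| - 1/4. -/
noncomputable def phi (x : ℝ) : ℝ := |x - 3/4 - ⌊x - 1/4⌋| - 1/4

noncomputable def nn (R : ℕ) (x : ℝ) : ℝ :=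
  max (x + R) 0 - max (x - R) 0 +
    2 * ∑ k ∈ Finset.Icc 1 (2 * R),
      (max (x + R + 1/4 - k) 0 - max (x + R + 3/4 - k) 0)

theorem nn_eq_phi_indicator (R : ℕ) (hR : 0 < R) (x : ℝ) :
    nn R x = Set.indicator (Set.Icc (-(R : ℝ)) R) phi x := by
  rcases lt_or_ge x (-(R:ℝ)) with hx | hx
  · rw [Set.indicator_of_notMem (by simp only [Set.mem_Icc, not_and_or, not_le]; left; exact hx)]
    unfold nn
    rw [max_eq_right (by linarith), max_eq_right (by linarith), Finset.sum_eq_zero]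
    · ring
    · intro k hk
      simp only [Finset.mem_Icc] at hk
      have hk1 : (1:ℝ) ≤ k := by exact_mod_cast hk.1
      rw [max_eq_right (by linarith), max_eq_right (by linarith)]; ring
  rcases lt_or_ge (R:ℝ) x with hx2 | hx2
  · rw [Set.indicator_of_notMem (by simp only [Set.mem_Icc, not_and_or, not_le]; right; exact hx2)]
    unfold nn
    have h0R : (0:ℝ) < R := by exact_mod_cast hR
    have hterm : ∀ k ∈ Finset.Icc 1 (2*R),
        (max (x + R + 1/4 - k) 0 - max (x + R + 3/4 - k) 0) = -(1/2) := by
      intro k hk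
      simp only [Finset.mem_Icc] at hk
      have hk2 : (k:ℝ) ≤ 2*R := by exact_mod_cast hk.2
      rw [max_eq_left (by linarith), max_eq_left (by linarith)]
      ring
    rw [max_eq_left (by linarith), max_eq_left (by linarith),
      Finset.sum_congr rfl hterm, Finset.sum_const, Nat.card_Icc]
    simp only [Nat.add_sub_cancel, nsmul_eq_mul]
    push_cast
    ring
  · -- x ∈ [-R, R]
    rw [Set.indicator_of_mem (Set.mem_Icc.mpr ⟨hx, hx2⟩)]
    obtain ⟨n, hn⟩ : ∃ n : ℕ, n = ⌊x + R + 1/4⌋₊ := ⟨_, rfl⟩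
    obtain ⟨m, hm⟩ : ∃ m : ℕ, m = ⌊x + R + 3/4⌋₊ := ⟨_, rfl⟩
    have hn_le : (n:ℝ) ≤ x + R + 1/4 := hn ▸ Nat.floor_le (by linarith)
    have hn_lt : x + R + 1/4 < n + 1 := hn ▸ Nat.lt_floor_add_one _
    have hm_le : (m:ℝ) ≤ x + R + 3/4 := hm ▸ Nat.floor_le (by linarith)
    have hm_lt : x + R + 3/4 < m + 1 := hm ▸ Nat.lt_floor_add_one _
    have hnm : n ≤ m := by rw [hn, hm]; exact Nat.floor_mono (by linarith)
    have hmn1 : m ≤ n + 1 := by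
      have h : (m:ℝ) < ((n + 2 : ℕ):ℝ) := by push_cast; linarith
      exact Nat.lt_succ_iff.mp (by exact_mod_cast h)
    have hm2R : m ≤ 2 * R := by
      have h : (m:ℝ) < ((2*R + 1 : ℕ):ℝ) := by push_cast; linarith
      exact Nat.lt_succ_iff.mp (by exact_mod_cast h)
    have hn2R : n ≤ 2 * R := le_trans hnm hm2R
    have hfl : ⌊x - 1/4⌋ = (m:ℤ) - R - 1 := by
      rw [Int.floor_eq_iff]
      constructor
      · push_cast; linarith
      · push_cast; linarith
    have hIcc : Finset.Icc 1 (2*R) = Finset.Ioc 0 (2*R) := by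
      rw [← Finset.Icc_add_one_left_eq_Ioc]; rfl
    set f : ℕ → ℝ := fun k => max (x + R + 1/4 - k) 0 - max (x + R + 3/4 - k) 0 with hf
    have hsum1 : ∑ k ∈ Finset.Ioc 0 n, f k = (n:ℝ) * (-(1/2)) := by
      have hterm : ∀ k ∈ Finset.Ioc 0 n, f k = -(1/2) := by
        intro k hk
        simp only [Finset.mem_Ioc] at hk
        have hk2 : (k:ℝ) ≤ n := by exact_mod_cast hk.2
        show max (x + R + 1/4 - k) 0 - max (x + R + 3/4 - k) 0 = -(1/2)
        rw [max_eq_left (by linarith), max_eq_left (by linarith)]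
        ring
      rw [Finset.sum_congr rfl hterm, Finset.sum_const, Nat.card_Ioc]
      simp only [Nat.sub_zero, nsmul_eq_mul]
    have hsum3 : ∑ k ∈ Finset.Ioc m (2*R), f k = 0 := by
      apply Finset.sum_eq_zero
      intro k hk
      simp only [Finset.mem_Ioc] at hk
      have hk1 : (m:ℝ) + 1 ≤ k := by exact_mod_cast hk.1
      show max (x + R + 1/4 - k) 0 - max (x + R + 3/4 - k) 0 = 0
      rw [max_eq_right (by linarith), max_eq_right (by linarith)]
      ring
    have hsplit : ∑ k ∈ Finset.Icc 1 (2*R), f k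
        = ∑ k ∈ Finset.Ioc 0 n, f k + ∑ k ∈ Finset.Ioc n m, f k + ∑ k ∈ Finset.Ioc m (2*R), f k := by
      rw [hIcc, ← Finset.sum_Ioc_consecutive f (Nat.zero_le m) hm2R,
        ← Finset.sum_Ioc_consecutive f (Nat.zero_le n) hnm]
    unfold nn
    rw [max_eq_left (by linarith), max_eq_right (by linarith)]
    rw [show (∑ k ∈ Finset.Icc 1 (2*R),
      (max (x + R + 1/4 - k) 0 - max (x + R + 3/4 - k) 0)) = ∑ k ∈ Finset.Icc 1 (2*R), f k from rfl]
    rw [hsplit, hsum1, hsum3]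
    unfold phi
    rw [hfl]
    rcases Nat.eq_or_lt_of_le hnm with he | hlt
    · -- m = n
      subst he
      rw [Finset.Ioc_self, Finset.sum_empty,
        abs_of_nonneg (by push_cast; linarith)]
      push_cast
      ring
    · -- m = n + 1
      have hmeq : m = n + 1 := le_antisymm hmn1 hlt
      subst hmeq
      have hIocs : Finset.Ioc n (n+1) = {n+1} := by
        ext k; simp only [Finset.mem_Ioc, Finset.mem_singleton]; omega
      rw [hIocs, Finset.sum_singleton]
      show _ + 2 * (_ + (max (x + R + 1/4 - ((n+1:ℕ):ℝ)) 0 - max (x + R + 3/4 - ((n+1:ℕ):ℝ)) 0) + _) = _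
      have h1 : x + R + 1/4 - ((n+1:ℕ):ℝ) ≤ 0 := by push_cast; linarith
      have h2 : 0 ≤ x + R + 3/4 - ((n+1:ℕ):ℝ) := by push_cast at hm_le ⊢; linarith
      rw [max_eq_right h1, max_eq_left h2,
        abs_of_neg (by push_cast; linarith)]
      push_cast
      ring
end

section
/- Let φ: ℝ → ℝ be 1-Lipschitz, let γ > 0, w a fixed unit vector in ℝ^d, and let x ∼ N(0, I_d), ξ₀ ∼ N(0, β), ξ ∼ N(0, σ²) be independent. Then the total variation distance between the joint distributions of (x, φ(γ⟨w,x⟩ + ξ₀) + ξ) and (x, φ(γ⟨w,x⟩) + ξ) is at most √β/(√(2π)·σ). -/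
open MeasureTheory ProbabilityTheory NNReal
open scoped ENNReal
open Filter

lemma exp_int_Ioi {b : ℝ} (hb : 0 < b) :
    ∫ x in Set.Ioi (0:ℝ), x * Real.exp (-b * x ^ 2) = 1 / (2 * b) := by
  have hderiv : ∀ x ∈ Set.Ici (0:ℝ),
      HasDerivAt (fun x => -(2*b)⁻¹ * Real.exp (-b * x ^ 2)) (x * Real.exp (-b * x ^ 2)) x := by
    intro x _
    have h1 : HasDerivAt (fun x : ℝ => -b * x ^ 2) (-b * (2 * x)) x := by
      simpa using (hasDerivAt_pow 2 x).const_mul (-b)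
    have h2 := h1.exp.const_mul (-(2*b)⁻¹)
    refine h2.congr_deriv ?_
    field_simp
  have hint : IntegrableOn (fun x : ℝ => x * Real.exp (-b * x ^ 2)) (Set.Ioi 0) :=
    (integrable_mul_exp_neg_mul_sq hb).integrableOn
  have h3 : Tendsto (fun x : ℝ => b * x ^ 2) atTop atTop :=
    (tendsto_pow_atTop (two_ne_zero)).const_mul_atTop hb
  have h4 := (Real.tendsto_exp_neg_atTop_nhds_zero).comp h3
  have h5 := h4.const_mul (-(2*b)⁻¹)
  rw [mul_zero] at h5
  have htend : Tendsto (fun x : ℝ => -(2*b)⁻¹ * Real.exp (-b * x ^ 2)) atTop (nhds 0) := by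
    simpa [Function.comp, neg_mul] using h5
  have := integral_Ioi_of_hasDerivAt_of_tendsto' hderiv hint htend
  rw [this]
  simp

lemma integrable_abs_exp {b : ℝ} (hb : 0 < b) :
    Integrable (fun x : ℝ => |x| * Real.exp (-b * x ^ 2)) := by
  have := (integrable_mul_exp_neg_mul_sq hb).abs
  simpa [abs_mul, abs_of_pos (Real.exp_pos _)] using this

lemma abs_exp_int {b : ℝ} (hb : 0 < b) :
    ∫ x : ℝ, |x| * Real.exp (-b * x ^ 2) = 1 / b := by
  have h0 : (fun x : ℝ => |x| * Real.exp (-b * x ^ 2))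
      = fun x : ℝ => |x| * Real.exp (-b * |x| ^ 2) := by
    funext x; rw [sq_abs]
  rw [h0]
  rw [integral_comp_abs (f := fun t : ℝ => t * Real.exp (-b * t ^ 2)), exp_int_Ioi hb]
  field_simp


lemma gaussPDF_le (m : ℝ) (v : ℝ≥0) (x : ℝ) :
    gaussianPDFReal m v x ≤ (Real.sqrt (2 * Real.pi * v))⁻¹ := by
  rw [gaussianPDFReal]
  have h1 : Real.exp (-(x - m) ^ 2 / (2 * v)) ≤ 1 := by
    apply Real.exp_le_one_iff.2
    apply div_nonpos_of_nonpos_of_nonneg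
    · simp [sq_nonneg]
    · positivity
  calc (Real.sqrt (2 * Real.pi * v))⁻¹ * Real.exp (-(x - m) ^ 2 / (2 * v))
      ≤ (Real.sqrt (2 * Real.pi * v))⁻¹ * 1 := by
        apply mul_le_mul_of_nonneg_left h1 (by positivity)
    _ = _ := mul_one _

lemma gaussPDF_abs_eq (β : ℝ≥0) :
    (fun u : ℝ => gaussianPDFReal 0 β u * |u|)
      = fun u : ℝ => (Real.sqrt (2 * Real.pi * β))⁻¹ * (|u| * Real.exp (-(2*(β:ℝ))⁻¹ * u ^ 2)) := by
  funext u
  rw [gaussianPDFReal]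
  rcases eq_or_ne (β : ℝ) 0 with h | h
  · simp [h]
  have : -(u - 0) ^ 2 / (2 * (β:ℝ)) = -(2*(β:ℝ))⁻¹ * u ^ 2 := by
    field_simp
    simp
  rw [this]
  ring

lemma gaussPDF_integrable_abs {β : ℝ≥0} (hβ : 0 < β) :
    Integrable (fun u : ℝ => gaussianPDFReal 0 β u * |u|) := by
  have hb : (0:ℝ) < (2 * (β:ℝ))⁻¹ := by
    have : (0:ℝ) < β := hβ
    positivity
  rw [gaussPDF_abs_eq β]
  exact (integrable_abs_exp hb).const_mul _

lemma gaussPDF_abs_moment {β : ℝ≥0} (hβ : 0 < β) :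
    (∫ u : ℝ, gaussianPDFReal 0 β u * |u|) ≤ Real.sqrt β := by
  have hβ' : (0:ℝ) < β := hβ
  have hb : (0:ℝ) < (2 * (β:ℝ))⁻¹ := by positivity
  have hS : Real.sqrt β * Real.sqrt (2 * Real.pi * β) = Real.sqrt (2 * Real.pi) * β := by
    rw [← Real.sqrt_mul (by positivity), show (β:ℝ) * (2 * Real.pi * β) = (2 * Real.pi) * β^2 by ring,
      Real.sqrt_mul (by positivity), Real.sqrt_sq hβ'.le]
  have hpi : (2:ℝ) ≤ Real.sqrt (2 * Real.pi) := by
    nlinarith [Real.sq_sqrt (by positivity : (0:ℝ) ≤ 2 * Real.pi), Real.sqrt_nonneg (2 * Real.pi),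
      Real.pi_gt_three]
  have hSpos : 0 < Real.sqrt (2 * Real.pi * β) := by positivity
  rw [gaussPDF_abs_eq β, integral_const_mul _ _, abs_exp_int hb, one_div, inv_inv,
    inv_mul_eq_div, div_le_iff₀ hSpos, hS]
  nlinarith


lemma gauss_toReal (m : ℝ) {v : ℝ≥0} (hv : v ≠ 0) (A : Set ℝ) :
    ((gaussianReal m v) A).toReal = ∫ x in A, gaussianPDFReal m v x := by
  rw [gaussianReal_apply_eq_integral m hv A, ENNReal.toReal_ofReal]
  exact integral_nonneg (fun x => gaussianPDFReal_nonneg m v x)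

lemma gauss_shift_le {v : ℝ≥0} (hv : v ≠ 0) {c : ℝ} (hc : 0 ≤ c) {B : Set ℝ}
    (hB : MeasurableSet B) :
    ((gaussianReal c v) B).toReal
      ≤ ((gaussianReal 0 v) B).toReal + c * (Real.sqrt (2 * Real.pi * v))⁻¹ := by
  have hvpos : (0:ℝ) < v := lt_of_le_of_ne v.coe_nonneg (by exact_mod_cast hv.symm)
  set K : ℝ := (Real.sqrt (2 * Real.pi * v))⁻¹ with hK
  set pc : ℝ → ℝ := gaussianPDFReal c v with hpc
  set p0 : ℝ → ℝ := gaussianPDFReal 0 v with hp0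
  set P : Set ℝ := Set.Ici (c/2) with hPdef
  -- pointwise comparisons
  have hcmp : ∀ x : ℝ, x ≤ c/2 → pc x ≤ p0 x := by
    intro x hx
    rw [hpc, hp0, gaussianPDFReal, gaussianPDFReal]
    apply mul_le_mul_of_nonneg_left _ (by positivity)
    apply Real.exp_le_exp.2
    apply div_le_div_of_nonneg_right (by nlinarith) (by positivity)
  have hcmp' : ∀ x : ℝ, c/2 ≤ x → p0 x ≤ pc x := by
    intro x hx
    rw [hpc, hp0, gaussianPDFReal, gaussianPDFReal]
    apply mul_le_mul_of_nonneg_left _ (by positivity)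
    apply Real.exp_le_exp.2
    apply div_le_div_of_nonneg_right (by nlinarith) (by positivity)
  have hintc : Integrable pc := integrable_gaussianPDFReal c v
  have hint0 : Integrable p0 := integrable_gaussianPDFReal 0 v
  have hintsub : Integrable (fun x => pc x - p0 x) := hintc.sub hint0
  -- step 2 : ∫_B (pc - p0) ≤ ∫_P (pc - p0)
  have hstep2 : ∫ x in B, (pc x - p0 x) ≤ ∫ x in P, (pc x - p0 x) := by
    have h1 : (∫ x in B ∩ P, (pc x - p0 x)) + (∫ x in B \ P, (pc x - p0 x))
        = ∫ x in B, (pc x - p0 x) :=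
      integral_inter_add_diff measurableSet_Ici hintsub.integrableOn
    have h2 : ∫ x in B \ P, (pc x - p0 x) ≤ 0 := by
      apply setIntegral_nonpos (hB.diff measurableSet_Ici)
      intro x hx
      have hx' : x < c/2 := by
        have := hx.2
        simpa [hPdef, Set.mem_Ici, not_le] using this
      exact sub_nonpos.2 (hcmp x hx'.le)
    have h3 : ∫ x in B ∩ P, (pc x - p0 x) ≤ ∫ x in P, (pc x - p0 x) := by
      apply setIntegral_mono_set hintsub.integrableOn
      · apply (ae_restrict_iff' measurableSet_Ici).2
        exact ae_of_all _ fun x hx => sub_nonneg.2 (hcmp' x hx)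
      · exact HasSubset.Subset.eventuallyLE Set.inter_subset_right
    linarith
  -- tail identity
  have hmap : (gaussianReal 0 v).map (· + c) = gaussianReal c v := by
    simpa using gaussianReal_map_add_const (μ := 0) (v := v) c
  have htail : (gaussianReal c v) P = (gaussianReal 0 v) (Set.Ici (-(c/2))) := by
    rw [← hmap, Measure.map_apply (measurable_add_const c) measurableSet_Ici,
      Set.preimage_add_const_Ici]
    congr 1
    ring_nf
  -- Ico bound
  have hIcoSub : Set.Ico (-(c/2)) (c/2) = Set.Ici (-(c/2)) \ Set.Ici (c/2) := by
    rw [Set.Ici_diff_Ici]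
  have hIcoMeas : (gaussianReal 0 v) (Set.Ico (-(c/2)) (c/2))
      = (gaussianReal 0 v) (Set.Ici (-(c/2))) - (gaussianReal 0 v) (Set.Ici (c/2)) := by
    rw [hIcoSub]
    exact measure_diff (Set.Ici_subset_Ici.2 (by linarith)) measurableSet_Ici.nullMeasurableSet
      (measure_ne_top _ _)
  have hIcoBound : ((gaussianReal 0 v) (Set.Ico (-(c/2)) (c/2))).toReal ≤ c * K := by
    rw [gauss_toReal 0 hv]
    calc ∫ x in Set.Ico (-(c/2)) (c/2), gaussianPDFReal 0 v x
        ≤ ∫ _x in Set.Ico (-(c/2)) (c/2), K := by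
          apply setIntegral_mono_on hint0.integrableOn
          · exact integrableOn_const measure_Ico_lt_top.ne
          · exact measurableSet_Ico
          · exact fun x _ => gaussPDF_le 0 v x
      _ = c * K := by
          rw [setIntegral_const, Real.volume_real_Ico, smul_eq_mul]
          congr 1
          rw [show c/2 - -(c/2) = c by ring, max_eq_left hc]
  -- assemble
  have e1 : ((gaussianReal c v) B).toReal - ((gaussianReal 0 v) B).toReal
      = ∫ x in B, (pc x - p0 x) := by
    rw [gauss_toReal c hv, gauss_toReal 0 hv,
      integral_sub hintc.integrableOn hint0.integrableOn]
  have e2 : ∫ x in P, (pc x - p0 x)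
      = ((gaussianReal c v) P).toReal - ((gaussianReal 0 v) P).toReal := by
    rw [gauss_toReal c hv, gauss_toReal 0 hv,
      integral_sub hintc.integrableOn hint0.integrableOn]
  have e3 : ((gaussianReal c v) P).toReal - ((gaussianReal 0 v) P).toReal
      = ((gaussianReal 0 v) (Set.Ico (-(c/2)) (c/2))).toReal := by
    rw [htail, hIcoMeas, ENNReal.toReal_sub_of_le
      (measure_mono (Set.Ici_subset_Ici.2 (by linarith))) (measure_ne_top _ _)]
  linarith [hstep2, hIcoBound, e1.symm.le, e2.le, e3.le]

lemma gauss_tv0 {v : ℝ≥0} (hv : v ≠ 0) {c : ℝ} (hc : 0 ≤ c) {B : Set ℝ}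
    (hB : MeasurableSet B) :
    |((gaussianReal c v) B).toReal - ((gaussianReal 0 v) B).toReal|
      ≤ c * (Real.sqrt (2 * Real.pi * v))⁻¹ := by
  have h1 := gauss_shift_le hv hc hB
  have h2 := gauss_shift_le hv hc hB.compl
  have hadd : ∀ m : ℝ, ((gaussianReal m v) B).toReal + ((gaussianReal m v) Bᶜ).toReal = 1 := by
    intro m
    have := measure_add_measure_compl (μ := gaussianReal m v) hB
    have := congrArg ENNReal.toReal this
    rwa [ENNReal.toReal_add (measure_ne_top _ _) (measure_ne_top _ _), measure_univ,
      ENNReal.toReal_one] at this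
  have hc1 := hadd c
  have hc0 := hadd 0
  rw [abs_le]
  constructor <;> linarith

lemma gauss_tv {v : ℝ≥0} (hv : v ≠ 0) (c₁ c₂ : ℝ) {B : Set ℝ} (hB : MeasurableSet B) :
    |((gaussianReal c₁ v) B).toReal - ((gaussianReal c₂ v) B).toReal|
      ≤ |c₁ - c₂| * (Real.sqrt (2 * Real.pi * v))⁻¹ := by
  -- reduce to the case c₂ = 0 by shifting
  have key : ∀ c₁ c₂ : ℝ, c₂ ≤ c₁ →
      |((gaussianReal c₁ v) B).toReal - ((gaussianReal c₂ v) B).toReal|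
        ≤ |c₁ - c₂| * (Real.sqrt (2 * Real.pi * v))⁻¹ := by
    intro c₁ c₂ hle
    have hmap : ∀ m : ℝ, (gaussianReal m v) B
        = (gaussianReal (m - c₂) v) ((· + c₂) ⁻¹' B) := by
      intro m
      have : (gaussianReal (m - c₂) v).map (· + c₂) = gaussianReal m v := by
        rw [gaussianReal_map_add_const]
        congr 1
        ring
      rw [← this, Measure.map_apply (measurable_add_const c₂) hB]
    rw [hmap c₁, hmap c₂, sub_self]
    have := gauss_tv0 hv (sub_nonneg.2 hle) (hB.preimage (measurable_add_const c₂))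
    calc |((gaussianReal (c₁ - c₂) v) ((· + c₂) ⁻¹' B)).toReal
        - ((gaussianReal 0 v) ((· + c₂) ⁻¹' B)).toReal|
        ≤ (c₁ - c₂) * (Real.sqrt (2 * Real.pi * v))⁻¹ := this
      _ = |c₁ - c₂| * (Real.sqrt (2 * Real.pi * v))⁻¹ := by
          rw [abs_of_nonneg (sub_nonneg.2 hle)]
  rcases le_total c₂ c₁ with h | h
  · exact key c₁ c₂ h
  · rw [abs_sub_comm, abs_sub_comm c₁ c₂]
    exact key c₂ c₁ h


lemma ennreal_le_add_ofReal {a b : ℝ≥0∞} (ha : a ≠ ⊤) (hb : b ≠ ⊤) {r : ℝ}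
    (h : a.toReal ≤ b.toReal + r) : a ≤ b + ENNReal.ofReal r := by
  calc a = ENNReal.ofReal a.toReal := (ENNReal.ofReal_toReal ha).symm
    _ ≤ ENNReal.ofReal (b.toReal + r) := ENNReal.ofReal_le_ofReal h
    _ ≤ ENNReal.ofReal b.toReal + ENNReal.ofReal r := ENNReal.ofReal_add_le
    _ = b + ENNReal.ofReal r := by rw [ENNReal.ofReal_toReal hb]

theorem tv_gaussianize (d : ℕ) (φ : ℝ → ℝ) (hφ : LipschitzWith 1 φ)
    (γ : ℝ) (hγ : 0 < γ) (w : Fin d → ℝ) (hw : ∑ i, w i ^ 2 = 1)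
    (β : ℝ≥0) (hβ : 0 < β) (σ : ℝ) (hσ : 0 < σ) :
    ∀ s : Set ((Fin d → ℝ) × ℝ), MeasurableSet s →
      |((Measure.map
            (fun p : (Fin d → ℝ) × ℝ × ℝ =>
              (p.1, φ (γ * ∑ i, w i * p.1 i + p.2.1) + p.2.2))
            ((Measure.pi fun _ : Fin d => gaussianReal 0 1).prod
              ((gaussianReal 0 β).prod (gaussianReal 0 (Real.toNNReal (σ ^ 2)))))) s).toReal -
        ((Measure.map
            (fun p : (Fin d → ℝ) × ℝ × ℝ =>
              (p.1, φ (γ * ∑ i, w i * p.1 i) + p.2.2))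
            ((Measure.pi fun _ : Fin d => gaussianReal 0 1).prod
              ((gaussianReal 0 β).prod (gaussianReal 0 (Real.toNNReal (σ ^ 2)))))) s).toReal|
        ≤ Real.sqrt β / (Real.sqrt (2 * Real.pi) * σ) := by
  intro s hs
  have hφm : Measurable φ := hφ.continuous.measurable
  set V : ℝ≥0 := Real.toNNReal (σ ^ 2) with hVdef
  have hVcoe : (V : ℝ) = σ ^ 2 := Real.coe_toNNReal _ (sq_nonneg σ)
  have hVne : V ≠ 0 := by
    intro h
    have : (V : ℝ) = 0 := by exact_mod_cast h
    rw [hVcoe] at this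
    nlinarith
  set K : ℝ := (Real.sqrt (2 * Real.pi * V))⁻¹ with hKdef
  have hKnonneg : 0 ≤ K := inv_nonneg.2 (Real.sqrt_nonneg _)
  have hKval : Real.sqrt β * K = Real.sqrt β / (Real.sqrt (2 * Real.pi) * σ) := by
    rw [hKdef, hVcoe, Real.sqrt_mul (by positivity) (σ ^ 2), Real.sqrt_sq hσ.le]
    rw [div_eq_mul_inv]
  set μx : Measure (Fin d → ℝ) := Measure.pi fun _ : Fin d => gaussianReal 0 1 with hμx
  set ν : Measure ℝ := gaussianReal 0 β with hν
  set κ : Measure ℝ := gaussianReal 0 V with hκ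
  set P : Measure ((Fin d → ℝ) × ℝ × ℝ) := μx.prod (ν.prod κ) with hP
  have hsum : Measurable fun x : Fin d → ℝ => γ * ∑ i, w i * x i := by
    apply measurable_const.mul
    exact Finset.measurable_sum _ fun i _ => measurable_const.mul (measurable_pi_apply i)
  -- the key representation
  have hrepr : ∀ g : (Fin d → ℝ) × ℝ → ℝ,
      Measurable (fun p : (Fin d → ℝ) × ℝ × ℝ => (p.1, g (p.1, p.2.1) + p.2.2)) →
      (Measure.map (fun p : (Fin d → ℝ) × ℝ × ℝ => (p.1, g (p.1, p.2.1) + p.2.2)) P) s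
        = ∫⁻ x, ∫⁻ u, (gaussianReal (g (x, u)) V) {t : ℝ | (x, t) ∈ s} ∂ν ∂μx := by
    intro g hg
    rw [Measure.map_apply hg hs, hP, Measure.prod_apply (hg hs)]
    apply lintegral_congr
    intro x
    rw [Measure.prod_apply (measurable_prodMk_left (hg hs))]
    apply lintegral_congr
    intro u
    have hTm : MeasurableSet {t : ℝ | (x, t) ∈ s} := measurable_prodMk_left hs
    have hset : Prod.mk u ⁻¹' (Prod.mk x ⁻¹'
          ((fun p : (Fin d → ℝ) × ℝ × ℝ => (p.1, g (p.1, p.2.1) + p.2.2)) ⁻¹' s))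
        = (fun t => g (x, u) + t) ⁻¹' {t : ℝ | (x, t) ∈ s} := by
      ext t
      simp [Set.mem_preimage]
    rw [hset, hκ, ← Measure.map_apply (measurable_const_add _) hTm,
      gaussianReal_map_const_add, zero_add]
  -- measurability of the two maps
  have hF1 : Measurable (fun p : (Fin d → ℝ) × ℝ × ℝ =>
      (p.1, φ (γ * ∑ i, w i * p.1 i + p.2.1) + p.2.2)) := by
    apply measurable_fst.prodMk
    exact ((hφm.comp ((hsum.comp measurable_fst).add (measurable_fst.comp measurable_snd))).add
      (measurable_snd.comp measurable_snd))
  have hF2 : Measurable (fun p : (Fin d → ℝ) × ℝ × ℝ =>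
      (p.1, φ (γ * ∑ i, w i * p.1 i) + p.2.2)) := by
    apply measurable_fst.prodMk
    exact ((hφm.comp (hsum.comp measurable_fst)).add (measurable_snd.comp measurable_snd))
  have h1 := hrepr (fun q : (Fin d → ℝ) × ℝ => φ (γ * ∑ i, w i * q.1 i + q.2)) hF1
  have h2 := hrepr (fun q : (Fin d → ℝ) × ℝ => φ (γ * ∑ i, w i * q.1 i)) hF2
  -- notation
  set T : (Fin d → ℝ) → Set ℝ := fun x => {t : ℝ | (x, t) ∈ s} with hT
  have hTm : ∀ x, MeasurableSet (T x) := fun x => measurable_prodMk_left hs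
  set C : (Fin d → ℝ) → ℝ≥0∞ := fun x => (gaussianReal (φ (γ * ∑ i, w i * x i)) V) (T x)
    with hC
  set G : (Fin d → ℝ) → ℝ → ℝ≥0∞ :=
    fun x u => (gaussianReal (φ (γ * ∑ i, w i * x i + u)) V) (T x) with hG
  set h : ℝ → ℝ≥0∞ := fun u => ENNReal.ofReal (|u| * K) with hh
  have hhm : Measurable h := (measurable_abs.mul_const K).ennreal_ofReal
  set c₀ : ℝ≥0∞ := ∫⁻ u, h u ∂ν with hc₀def
  -- pointwise total-variation bound
  have hpoint : ∀ x u, |(G x u).toReal - (C x).toReal| ≤ |u| * K := by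
    intro x u
    refine (gauss_tv hVne _ _ (hTm x)).trans ?_
    apply mul_le_mul_of_nonneg_right _ hKnonneg
    have := hφ.dist_le_mul (γ * ∑ i, w i * x i + u) (γ * ∑ i, w i * x i)
    simpa [Real.dist_eq, add_sub_cancel_left] using this
  have hle1 : ∀ x u, G x u ≤ C x + h u := by
    intro x u
    apply ennreal_le_add_ofReal (measure_ne_top _ _) (measure_ne_top _ _)
    have := (abs_le.1 (hpoint x u)).2
    linarith
  have hle2 : ∀ x u, C x ≤ G x u + h u := by
    intro x u
    apply ennreal_le_add_ofReal (measure_ne_top _ _) (measure_ne_top _ _)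
    have := (abs_le.1 (hpoint x u)).1
    linarith
  have hνprob : IsProbabilityMeasure ν := by rw [hν]; infer_instance
  have hμxprob : IsProbabilityMeasure μx := by rw [hμx]; infer_instance
  -- identify the second measure
  have h2' : (Measure.map (fun p : (Fin d → ℝ) × ℝ × ℝ =>
      (p.1, φ (γ * ∑ i, w i * p.1 i) + p.2.2)) P) s = ∫⁻ x, C x ∂μx := by
    rw [h2]
    apply lintegral_congr
    intro x
    simp [lintegral_const]
    rfl
  -- the two one-sided bounds
  have hbound1 : (Measure.map (fun p : (Fin d → ℝ) × ℝ × ℝ =>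
      (p.1, φ (γ * ∑ i, w i * p.1 i + p.2.1) + p.2.2)) P) s
      ≤ (Measure.map (fun p : (Fin d → ℝ) × ℝ × ℝ =>
      (p.1, φ (γ * ∑ i, w i * p.1 i) + p.2.2)) P) s + c₀ := by
    rw [h1, h2']
    calc ∫⁻ x, ∫⁻ u, G x u ∂ν ∂μx
        ≤ ∫⁻ x, (C x + c₀) ∂μx := by
          apply lintegral_mono
          intro x
          calc ∫⁻ u, G x u ∂ν ≤ ∫⁻ u, (C x + h u) ∂ν := lintegral_mono fun u => hle1 x u
            _ = C x + c₀ := by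
                rw [lintegral_add_right _ hhm]
                simp [lintegral_const]
                rfl
      _ = (∫⁻ x, C x ∂μx) + c₀ := by
          rw [lintegral_add_right _ measurable_const]
          simp [lintegral_const]
  have hbound2 : (Measure.map (fun p : (Fin d → ℝ) × ℝ × ℝ =>
      (p.1, φ (γ * ∑ i, w i * p.1 i) + p.2.2)) P) s
      ≤ (Measure.map (fun p : (Fin d → ℝ) × ℝ × ℝ =>
      (p.1, φ (γ * ∑ i, w i * p.1 i + p.2.1) + p.2.2)) P) s + c₀ := by
    rw [h1, h2']
    calc ∫⁻ x, C x ∂μx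
        = ∫⁻ x, ∫⁻ u, C x ∂ν ∂μx := by
          apply lintegral_congr
          intro x
          simp [lintegral_const]
      _ ≤ ∫⁻ x, ∫⁻ u, (G x u + h u) ∂ν ∂μx :=
          lintegral_mono fun x => lintegral_mono fun u => hle2 x u
      _ = ∫⁻ x, ((∫⁻ u, G x u ∂ν) + c₀) ∂μx := by
          apply lintegral_congr
          intro x
          rw [lintegral_add_right _ hhm]
      _ = (∫⁻ x, ∫⁻ u, G x u ∂ν ∂μx) + c₀ := by
          rw [lintegral_add_right _ measurable_const]
          simp [lintegral_const]
  -- bound c₀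
  have hβ' : (0:ℝ) < β := hβ
  have hc₀ : c₀ ≤ ENNReal.ofReal (Real.sqrt β * K) := by
    have hint : Integrable (fun u : ℝ => gaussianPDFReal 0 β u * |u| * K) :=
      (gaussPDF_integrable_abs hβ).mul_const K
    have heq : c₀ = ENNReal.ofReal (∫ u : ℝ, gaussianPDFReal 0 β u * |u| * K) := by
      rw [hc₀def, hν, gaussianReal_of_var_ne_zero 0 hβ.ne',
        lintegral_withDensity_eq_lintegral_mul _ (measurable_gaussianPDF 0 β) hhm,
        ofReal_integral_eq_lintegral_ofReal hint
          (ae_of_all _ fun u => mul_nonneg (mul_nonneg (gaussianPDFReal_nonneg 0 β u) (abs_nonneg u)) hKnonneg)]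
      apply lintegral_congr
      intro u
      simp only [Pi.mul_apply, hh, gaussianPDF_def]
      rw [← ENNReal.ofReal_mul (gaussianPDFReal_nonneg 0 β u), mul_assoc]
    rw [heq]
    apply ENNReal.ofReal_le_ofReal
    rw [integral_mul_const]
    exact mul_le_mul_of_nonneg_right (gaussPDF_abs_moment hβ) hKnonneg
  -- wrap up
  have hprob1 : IsProbabilityMeasure (Measure.map (fun p : (Fin d → ℝ) × ℝ × ℝ =>
      (p.1, φ (γ * ∑ i, w i * p.1 i + p.2.1) + p.2.2)) P) :=
    Measure.isProbabilityMeasure_map hF1.aemeasurable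
  have hprob2 : IsProbabilityMeasure (Measure.map (fun p : (Fin d → ℝ) × ℝ × ℝ =>
      (p.1, φ (γ * ∑ i, w i * p.1 i) + p.2.2)) P) :=
    Measure.isProbabilityMeasure_map hF2.aemeasurable
  have hfin1 := measure_ne_top (Measure.map (fun p : (Fin d → ℝ) × ℝ × ℝ =>
      (p.1, φ (γ * ∑ i, w i * p.1 i + p.2.1) + p.2.2)) P) s
  have hfin2 := measure_ne_top (Measure.map (fun p : (Fin d → ℝ) × ℝ × ℝ =>
      (p.1, φ (γ * ∑ i, w i * p.1 i) + p.2.2)) P) s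
  have hR : 0 ≤ Real.sqrt β * K := mul_nonneg (Real.sqrt_nonneg _) hKnonneg
  have key : ∀ a b : ℝ≥0∞, a ≠ ⊤ → b ≠ ⊤ → a ≤ b + c₀ →
      a.toReal ≤ b.toReal + Real.sqrt β * K := by
    intro a b ha hb hab
    have h' : a ≤ b + ENNReal.ofReal (Real.sqrt β * K) :=
      hab.trans (add_le_add le_rfl hc₀)
    have h'' := ENNReal.toReal_le_toReal ha
      (ENNReal.add_ne_top.2 ⟨hb, ENNReal.ofReal_ne_top⟩) |>.2 h'
    rwa [ENNReal.toReal_add hb ENNReal.ofReal_ne_top, ENNReal.toReal_ofReal hR] at h''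
  rw [← hKval]
  have k1 := key _ _ hfin1 hfin2 hbound1
  have k2 := key _ _ hfin2 hfin1 hbound2
  rw [abs_le]
  constructor <;> linarith
end

section
/- Let R ∈ ℕ, γ > 0, σ > 0, w a unit vector in ℝ^d. Define φ(x) = |x - 3/4 - ⌊x - 1/4⌋| - 1/4 and nn as the neural network coinciding with φ on [-R, R] and vanishing outside. For x ∼ N(0, I_d) and independent ξ ∼ N(0, σ²), the total variation distance between the laws of (x, φ(γ⟨w,x⟩) + ξ) and (x, nn(γ⟨w,x⟩) + ξ) is at most (1/(4σ)) · P_{g∼N(0,1)}[|g| ≥ R/γ]. -/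
open MeasureTheory ProbabilityTheory NNReal

open Real

lemma phi_abs_le (x : ℝ) : |phi x| ≤ 1/4 := by
  have h1 := Int.floor_le (x - 1/4)
  have h2 := Int.lt_floor_add_one (x - 1/4)
  have habs : |x - 3/4 - ⌊x - 1/4⌋| ≤ 1/2 := by
    rw [abs_le]; push_cast at h2 ⊢; constructor <;> linarith
  have habs0 : (0:ℝ) ≤ |x - 3/4 - ⌊x - 1/4⌋| := abs_nonneg _
  rw [phi, abs_le]; constructor <;> linarith

lemma nn_eq_zero (R : ℕ) (x : ℝ) (hx : (R:ℝ) ≤ |x|) : nn R x = 0 := by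
  have hR0 : (0:ℝ) ≤ R := Nat.cast_nonneg R
  rcases le_abs.mp hx with h | h
  · have hsum : ∀ k ∈ Finset.Icc 1 (2*R),
        (max (x + R + 1/4 - k) 0 - max (x + R + 3/4 - k) 0) = -(1/2 : ℝ) := by
      intro k hk
      obtain ⟨hk1, hk2⟩ := Finset.mem_Icc.mp hk
      have hk2' : (k:ℝ) ≤ 2*R := by exact_mod_cast hk2
      rw [max_eq_left (by linarith), max_eq_left (by linarith)]
      ring
    rw [nn, Finset.sum_congr rfl hsum, Finset.sum_const, Nat.card_Icc,
      max_eq_left (by linarith), max_eq_left (by linarith)]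
    simp only [nsmul_eq_mul]
    push_cast
    ring
  · have h' : x ≤ -(R:ℝ) := by linarith
    have hsum : ∀ k ∈ Finset.Icc 1 (2*R),
        (max (x + R + 1/4 - k) 0 - max (x + R + 3/4 - k) 0) = 0 := by
      intro k hk
      obtain ⟨hk1, hk2⟩ := Finset.mem_Icc.mp hk
      have hk1' : (1:ℝ) ≤ k := by exact_mod_cast hk1
      rw [max_eq_right (by linarith), max_eq_right (by linarith)]
      ring
    rw [nn, Finset.sum_congr rfl hsum, Finset.sum_const,
      max_eq_right (by linarith), max_eq_right (by linarith)]
    simp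

lemma nn_eq_phi (R : ℕ) (x : ℝ) (hx : |x| ≤ R) : nn R x = phi x := by
  obtain ⟨hx1, hx2⟩ := abs_le.mp hx
  have hy0 : 0 ≤ x + R := by linarith
  have hy2 : x + R ≤ 2*R := by linarith
  set m : ℤ := ⌊x + R + 1/4⌋ with hm
  have hm0 : 0 ≤ m := Int.le_floor.mpr (by push_cast; linarith)
  have hmle : (m:ℝ) ≤ x + R + 1/4 := Int.floor_le _
  have hmgt : x + R + 1/4 < m + 1 := Int.lt_floor_add_one _
  have hm2R : m ≤ 2*R := by
    have h1 : (m:ℝ) < 2*(R:ℝ) + 1 := by linarith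
    have h2 : m < 2*(R:ℤ) + 1 := by exact_mod_cast h1
    omega
  set mn : ℕ := m.toNat with hmn
  have hmnm : (mn:ℝ) = (m:ℝ) := by exact_mod_cast Int.toNat_of_nonneg hm0
  have hmn2R : mn ≤ 2*R := by omega
  -- the sum
  have hsum : ∑ k ∈ Finset.Icc 1 (2*R),
      (max (x + R + 1/4 - k) 0 - max (x + R + 3/4 - k) 0)
      = -(mn:ℝ)/2 - max (x + R - 1/4 - mn) 0 := by
    have hIcc : Finset.Icc 1 (2*R) = Finset.Ioc 0 (2*R) := Finset.Icc_add_one_left_eq_Ioc 0 (2*R)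
    rw [hIcc, ← Finset.sum_Ioc_consecutive _ (Nat.zero_le mn) hmn2R]
    have h1 : ∑ k ∈ Finset.Ioc 0 mn,
        (max (x + R + 1/4 - (k:ℝ)) 0 - max (x + R + 3/4 - k) 0) = -(mn:ℝ)/2 := by
      have hterm : ∀ k ∈ Finset.Ioc 0 mn,
          (max (x + R + 1/4 - (k:ℝ)) 0 - max (x + R + 3/4 - k) 0) = -(1/2:ℝ) := by
        intro k hk
        obtain ⟨_, hk2⟩ := Finset.mem_Ioc.mp hk
        have hk2' : (k:ℝ) ≤ mn := by exact_mod_cast hk2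
        rw [hmnm] at hk2'
        rw [max_eq_left (by linarith), max_eq_left (by linarith)]
        ring
      rw [Finset.sum_congr rfl hterm, Finset.sum_const, Nat.card_Ioc, Nat.sub_zero,
        nsmul_eq_mul]
      ring
    rw [h1]
    rcases Nat.lt_or_ge mn (2*R) with hlt | hge
    · rw [← Finset.sum_Ioc_consecutive _ (Nat.le_succ mn) hlt]
      have hsing : Finset.Ioc mn (mn+1) = {mn+1} := by
        rw [← Finset.Icc_add_one_left_eq_Ioc, Finset.Icc_self]
      have hzero : ∀ k ∈ Finset.Ioc (mn+1) (2*R),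
          (max (x + R + 1/4 - (k:ℝ)) 0 - max (x + R + 3/4 - k) 0) = 0 := by
        intro k hk
        obtain ⟨hk1, _⟩ := Finset.mem_Ioc.mp hk
        have hk1' : (mn:ℝ) + 2 ≤ k := by exact_mod_cast hk1
        rw [hmnm] at hk1'
        rw [max_eq_right (by linarith), max_eq_right (by linarith)]
        ring
      rw [Finset.sum_congr rfl hzero, Finset.sum_const, hsing, Finset.sum_singleton]
      have hcast : ((mn + 1 : ℕ):ℝ) = (mn:ℝ) + 1 := by push_cast; ring
      rw [hcast]
      have hc1 : max (x + R + 1/4 - ((mn:ℝ)+1)) 0 = 0 := by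
        rw [hmnm]
        exact max_eq_right (by linarith)
      have hc2 : x + R + 3/4 - ((mn:ℝ)+1) = x + R - 1/4 - mn := by ring
      rw [hc1, hc2]
      ring
    · have hEq : mn = 2*R := le_antisymm hmn2R hge
      have hmx : max (x + R - 1/4 - (mn:ℝ)) 0 = 0 := by
        apply max_eq_right
        have : (mn:ℝ) = 2*R := by exact_mod_cast hEq
        linarith
      rw [← hEq, Finset.Ioc_self, Finset.sum_empty, hmx]
      ring
  rw [nn, hsum, max_eq_left (by linarith), max_eq_right (by linarith)]
  -- now compute phi
  rcases lt_or_ge (x + R + 1/4 - m) (1/2) with hf | hf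
  · have hfl : ⌊x - 1/4⌋ = m - R - 1 := by
      rw [Int.floor_eq_iff]
      push_cast
      constructor <;> linarith
    rw [phi, hfl]
    have habs : x - 3/4 - ((m:ℝ) - R - 1) = x + R + 1/4 - m := by push_cast; ring
    have hmx : max (x + R - 1/4 - (mn:ℝ)) 0 = 0 := by
      apply max_eq_right; rw [hmnm]; linarith
    rw [hmx]
    push_cast
    rw [habs, abs_of_nonneg (by linarith)]
    rw [hmnm]
    ring
  · have hfl : ⌊x - 1/4⌋ = m - R := by
      rw [Int.floor_eq_iff]
      push_cast
      constructor <;> linarith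
    rw [phi, hfl]
    have hmx : max (x + R - 1/4 - (mn:ℝ)) 0 = x + R - 1/4 - m := by
      rw [hmnm]; apply max_eq_left; linarith
    rw [hmx]
    push_cast
    rw [abs_of_nonpos (by linarith)]
    rw [hmnm]
    ring

lemma pdf_conv (v1 v2 : ℝ≥0) (h1 : v1 ≠ 0) (h2 : v2 ≠ 0) (z x : ℝ) :
    gaussianPDFReal 0 v1 x * gaussianPDFReal 0 v2 (z - x)
      = gaussianPDFReal 0 (v1 + v2) z
        * gaussianPDFReal ((v1:ℝ) * z / ((v1:ℝ) + (v2:ℝ))) (v1 * v2 / (v1 + v2)) x := by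
  have hv1 : (0:ℝ) < v1 := by exact_mod_cast pos_iff_ne_zero.mpr h1
  have hv2 : (0:ℝ) < v2 := by exact_mod_cast pos_iff_ne_zero.mpr h2
  have hπ : (0:ℝ) < π := Real.pi_pos
  have hs : (0:ℝ) < (v1:ℝ) + v2 := by linarith
  have hcoe1 : ((v1 + v2 : ℝ≥0) : ℝ) = (v1:ℝ) + v2 := by push_cast; ring
  have hcoe2 : ((v1 * v2 / (v1 + v2) : ℝ≥0) : ℝ) = (v1:ℝ) * v2 / ((v1:ℝ) + v2) := by
    push_cast; ring
  simp only [gaussianPDFReal, hcoe1, hcoe2, sub_zero]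
  -- constants
  have hconst : (√(2 * π * v1))⁻¹ * (√(2 * π * v2))⁻¹
      = (√(2 * π * ((v1:ℝ) + v2)))⁻¹ * (√(2 * π * ((v1:ℝ) * v2 / ((v1:ℝ) + v2))))⁻¹ := by
    rw [← mul_inv, ← mul_inv, ← Real.sqrt_mul (by positivity), ← Real.sqrt_mul (by positivity)]
    congr 1
    field_simp
  have hexp : rexp (-x ^ 2 / (2 * v1)) * rexp (-(z - x) ^ 2 / (2 * v2))
      = rexp (-z ^ 2 / (2 * ((v1:ℝ) + v2)))
        * rexp (-(x - (v1:ℝ) * z / ((v1:ℝ) + v2)) ^ 2 / (2 * ((v1:ℝ) * v2 / ((v1:ℝ) + v2)))) := by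
    rw [← Real.exp_add, ← Real.exp_add]
    congr 1
    field_simp
    ring
  calc (√(2 * π * v1))⁻¹ * rexp (-x ^ 2 / (2 * v1))
      * ((√(2 * π * v2))⁻¹ * rexp (-(z - x) ^ 2 / (2 * v2)))
      = (√(2 * π * v1))⁻¹ * (√(2 * π * v2))⁻¹
        * (rexp (-x ^ 2 / (2 * v1)) * rexp (-(z - x) ^ 2 / (2 * v2))) := by ring
    _ = _ := by rw [hconst, hexp]; ring

set_option maxHeartbeats 1000000 in
lemma gauss_conv (v1 v2 : ℝ≥0) :
    Measure.map (fun p : ℝ × ℝ => p.1 + p.2)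
      ((gaussianReal 0 v1).prod (gaussianReal 0 v2)) = gaussianReal 0 (v1 + v2) := by
  by_cases h1 : v1 = 0
  · subst h1
    rw [gaussianReal_zero_var, Measure.dirac_prod,
      Measure.map_map measurable_add (measurable_prodMk_left)]
    have : ((fun p : ℝ × ℝ => p.1 + p.2) ∘ (Prod.mk (0:ℝ))) = fun x : ℝ => x := by
      funext x; simp
    rw [this, Measure.map_id', zero_add]
  by_cases h2 : v2 = 0
  · subst h2
    rw [gaussianReal_zero_var, Measure.prod_dirac,
      Measure.map_map measurable_add (measurable_prodMk_right)]
    have : ((fun p : ℝ × ℝ => p.1 + p.2) ∘ (fun x : ℝ => (x, (0:ℝ)))) = fun x : ℝ => x := by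
      funext x; simp
    rw [this, Measure.map_id', add_zero]
  have h12 : v1 + v2 ≠ 0 := fun h => h1 (by simpa using (add_eq_zero.mp h).1)
  have h12' : v1 * v2 / (v1 + v2) ≠ 0 := by
    rw [ne_eq, div_eq_zero_iff]
    push_neg
    exact ⟨mul_ne_zero h1 h2, h12⟩
  ext s hs
  have key : ∀ z, ∫⁻ x, ENNReal.ofReal
        (gaussianPDFReal 0 v1 x * gaussianPDFReal 0 v2 (z - x)) ∂volume
      = gaussianPDF 0 (v1 + v2) z := by
    intro z
    have hpt : ∀ x, ENNReal.ofReal (gaussianPDFReal 0 v1 x * gaussianPDFReal 0 v2 (z - x))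
        = ENNReal.ofReal (gaussianPDFReal 0 (v1+v2) z)
          * gaussianPDF ((v1:ℝ) * z / ((v1:ℝ) + (v2:ℝ))) (v1 * v2 / (v1 + v2)) x := by
      intro x
      rw [pdf_conv v1 v2 h1 h2 z x, ENNReal.ofReal_mul (gaussianPDFReal_nonneg _ _ _)]
      rfl
    simp_rw [hpt]
    rw [lintegral_const_mul _ (measurable_gaussianPDF _ _),
      lintegral_gaussianPDF_eq_one _ h12', mul_one]
    rfl
  have hsec : ∀ x : ℝ, (Prod.mk x ⁻¹' ((fun p : ℝ × ℝ => p.1 + p.2) ⁻¹' s))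
      = (fun y => x + y) ⁻¹' s := fun x => rfl
  have hg : Measurable fun x : ℝ =>
      ∫⁻ z in s, ENNReal.ofReal (gaussianPDFReal 0 v2 (z - x)) ∂volume := by
    apply Measurable.lintegral_prod_right
    exact ((measurable_gaussianPDFReal 0 v2).comp
      (measurable_snd.sub measurable_fst)).ennreal_ofReal
  rw [Measure.map_apply measurable_add hs, Measure.prod_apply (measurable_add hs)]
  have hpoint : ∀ x : ℝ, gaussianReal 0 v2 (Prod.mk x ⁻¹' ((fun p : ℝ × ℝ => p.1 + p.2) ⁻¹' s))
      = ∫⁻ z in s, ENNReal.ofReal (gaussianPDFReal 0 v2 (z - x)) ∂volume := by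
    intro x
    rw [hsec x, ← Measure.map_apply (measurable_const_add x) hs,
      gaussianReal_map_const_add, zero_add, gaussianReal_apply x h2 s]
    refine lintegral_congr fun z => ?_
    exact (congrArg ENNReal.ofReal (by rw [gaussianPDFReal_sub z x, zero_add] :
      gaussianPDFReal 0 v2 (z - x) = gaussianPDFReal x v2 z)).symm
  rw [lintegral_congr hpoint, gaussianReal_of_var_ne_zero 0 h1,
    lintegral_withDensity_eq_lintegral_mul volume (measurable_gaussianPDF 0 v1) hg]
  have hstep2 : ∀ x : ℝ, ((gaussianPDF 0 v1) * fun x =>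
        ∫⁻ z in s, ENNReal.ofReal (gaussianPDFReal 0 v2 (z - x)) ∂volume) x
      = ∫⁻ z in s, ENNReal.ofReal (gaussianPDFReal 0 v1 x)
          * ENNReal.ofReal (gaussianPDFReal 0 v2 (z - x)) ∂volume := by
    intro x
    simp only [Pi.mul_apply]
    exact (lintegral_const_mul _ (((measurable_gaussianPDFReal 0 v2).comp
      (measurable_id.sub measurable_const)).ennreal_ofReal)).symm
  rw [lintegral_congr hstep2]
  rw [lintegral_lintegral_swap ((((measurable_gaussianPDFReal 0 v1).comp
    measurable_fst).ennreal_ofReal.mul ((measurable_gaussianPDFReal 0 v2).comp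
      (measurable_snd.sub measurable_fst)).ennreal_ofReal)).aemeasurable]
  have hstep4 : ∀ z : ℝ, ∫⁻ x, ENNReal.ofReal (gaussianPDFReal 0 v1 x)
        * ENNReal.ofReal (gaussianPDFReal 0 v2 (z - x)) ∂volume
      = gaussianPDF 0 (v1 + v2) z := by
    intro z
    rw [← key z]
    exact lintegral_congr fun x => (ENNReal.ofReal_mul (gaussianPDFReal_nonneg _ _ _)).symm
  rw [lintegral_congr hstep4]
  exact (gaussianReal_apply 0 h12 s).symm

lemma map_sum_pi : ∀ (n : ℕ) (w : Fin n → ℝ),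
    Measure.map (fun x : Fin n → ℝ => ∑ i, w i * x i)
      (Measure.pi fun _ : Fin n => gaussianReal 0 1)
      = gaussianReal 0 (∑ i, Real.toNNReal (w i ^ 2)) := by
  intro n
  induction n with
  | zero =>
    intro w
    simp only [Finset.univ_eq_empty, Finset.sum_empty]
    rw [Measure.map_const]
    simp
  | succ n ih =>
    intro w
    have hmp := measurePreserving_piFinSuccAbove (fun _ : Fin (n+1) => gaussianReal 0 1) 0
    set e := MeasurableEquiv.piFinSuccAbove (fun _ : Fin (n+1) => ℝ) 0 with he
    have hcomp : (fun x : Fin (n+1) → ℝ => ∑ i, w i * x i)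
        = (fun p : ℝ × ℝ => p.1 + p.2)
          ∘ (Prod.map (fun a : ℝ => w 0 * a)
              (fun y : Fin n → ℝ => ∑ j, w ((0:Fin (n+1)).succAbove j) * y j)) ∘ e := by
      funext x
      simp only [Function.comp_apply, Prod.map_apply]
      rw [Fin.sum_univ_succAbove (fun i => w i * x i) 0]
      rfl
    rw [hcomp, ← Function.comp_assoc]
    rw [← Measure.map_map (by fun_prop) e.measurable]
    rw [hmp.map_eq]
    rw [← Measure.map_map measurable_add (by fun_prop)]
    rw [← Measure.map_prod_map _ _ (by fun_prop : Measurable fun a : ℝ => w 0 * a)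
      (by fun_prop : Measurable fun y : Fin n → ℝ => ∑ j, w ((0:Fin (n+1)).succAbove j) * y j)]
    rw [gaussianReal_map_const_mul (w 0), ih (fun j => w ((0:Fin (n+1)).succAbove j)),
      mul_zero, gauss_conv]
    congr 1
    rw [Fin.sum_univ_succAbove (fun i => Real.toNNReal (w i ^ 2)) 0, mul_one]
    congr 1
    exact NNReal.coe_injective (by simp [Real.coe_toNNReal _ (sq_nonneg _)])

lemma gauss_shift_one {σ : ℝ} (hσ : 0 < σ) (a b : ℝ) (hab : a ≤ b) {A : Set ℝ}
    (hA : MeasurableSet A) :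
    (gaussianReal a (σ^2).toNNReal A).toReal - (gaussianReal b (σ^2).toNNReal A).toReal
      ≤ (b - a) / (2*σ) := by
  set v := (σ^2).toNNReal with hv
  have hv0 : v ≠ 0 := by
    rw [hv, ne_eq, Real.toNNReal_eq_zero, not_le]; positivity
  have hvc : (v:ℝ) = σ^2 := Real.coe_toNNReal _ (sq_nonneg σ)
  set m : ℝ := (a+b)/2 with hm
  set c : ℝ := m - (b - a) with hc
  have hcm : c ≤ m := by rw [hc]; linarith
  -- pointwise comparison on Iic m
  have hcmp : ∀ x ∈ Set.Iic m, gaussianPDFReal b v x ≤ gaussianPDFReal a v x := by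
    intro x hx
    simp only [Set.mem_Iic] at hx
    simp only [gaussianPDFReal]
    apply mul_le_mul_of_nonneg_left _ (inv_nonneg.mpr (Real.sqrt_nonneg _))
    apply Real.exp_le_exp.mpr
    rw [hvc]
    have h2v : (0:ℝ) < 2*σ^2 := by positivity
    rw [div_le_div_iff_of_pos_right h2v]
    nlinarith
  -- uniform bound on the density
  have hbd : ∀ x, gaussianPDFReal a v x ≤ (2*σ)⁻¹ := by
    intro x
    simp only [gaussianPDFReal]
    have hsq : 2*σ ≤ √(2 * π * v) := by
      rw [hvc]
      have h4 : ((2*σ)^2 : ℝ) ≤ 2 * π * σ^2 := by nlinarith [Real.pi_gt_three]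
      calc (2*σ : ℝ) = √((2*σ)^2) := (Real.sqrt_sq (by positivity)).symm
        _ ≤ √(2 * π * σ^2) := Real.sqrt_le_sqrt h4
    calc (√(2 * π * v))⁻¹ * rexp (-(x - a)^2 / (2*v))
        ≤ (√(2 * π * v))⁻¹ * 1 := by
          apply mul_le_mul_of_nonneg_left _ (inv_nonneg.mpr (Real.sqrt_nonneg _))
          apply Real.exp_le_one_iff.mpr
          rw [hvc]
          apply div_nonpos_of_nonpos_of_nonneg (neg_nonpos.mpr (sq_nonneg _)) (by positivity)
      _ = (√(2 * π * v))⁻¹ := mul_one _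
      _ ≤ (2*σ)⁻¹ := by
          apply inv_anti₀ (by positivity) hsq
  have hInt : ∀ (μ' : ℝ) (S : Set ℝ), IntegrableOn (gaussianPDFReal μ' v) S volume :=
    fun μ' S => (integrable_gaussianPDFReal μ' v).integrableOn
  have htoReal : ∀ (μ' : ℝ) (S : Set ℝ),
      (gaussianReal μ' v S).toReal = ∫ x in S, gaussianPDFReal μ' v x := by
    intro μ' S
    rw [gaussianReal_apply_eq_integral μ' hv0 S,
      ENNReal.toReal_ofReal (integral_nonneg fun x => gaussianPDFReal_nonneg _ _ _)]
  rw [htoReal, htoReal, ← integral_sub (hInt a A) (hInt b A)]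
  have step3 : ∫ x in A, (gaussianPDFReal a v x - gaussianPDFReal b v x)
      ≤ ∫ x in Set.Iic m, (gaussianPDFReal a v x - gaussianPDFReal b v x) := by
    have hsplit : ∫ x in A, (gaussianPDFReal a v x - gaussianPDFReal b v x)
        = (∫ x in A ∩ Set.Iic m, (gaussianPDFReal a v x - gaussianPDFReal b v x))
          + ∫ x in A ∩ Set.Ioi m, (gaussianPDFReal a v x - gaussianPDFReal b v x) := by
      have hA_eq : A = (A ∩ Set.Iic m) ∪ (A ∩ Set.Ioi m) := by
        rw [← Set.inter_union_distrib_left, Set.Iic_union_Ioi, Set.inter_univ]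
      conv_lhs => rw [hA_eq]
      exact setIntegral_union
        (Set.disjoint_of_subset Set.inter_subset_right Set.inter_subset_right
          (Set.Iic_disjoint_Ioi le_rfl))
        (hA.inter measurableSet_Ioi) ((hInt a _).sub (hInt b _)) ((hInt a _).sub (hInt b _))
    rw [hsplit]
    have hneg : ∫ x in A ∩ Set.Ioi m, (gaussianPDFReal a v x - gaussianPDFReal b v x) ≤ 0 := by
      apply setIntegral_nonpos (hA.inter measurableSet_Ioi)
      intro x hx
      have hx' : m ≤ x := le_of_lt hx.2
      simp only [gaussianPDFReal, sub_nonpos]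
      apply mul_le_mul_of_nonneg_left _ (inv_nonneg.mpr (Real.sqrt_nonneg _))
      apply Real.exp_le_exp.mpr
      rw [hvc]
      rw [div_le_div_iff_of_pos_right (by positivity : (0:ℝ) < 2*σ^2)]
      nlinarith
    have hmono : ∫ x in A ∩ Set.Iic m, (gaussianPDFReal a v x - gaussianPDFReal b v x)
        ≤ ∫ x in Set.Iic m, (gaussianPDFReal a v x - gaussianPDFReal b v x) := by
      apply setIntegral_mono_set ((hInt a _).sub (hInt b _))
      · refine (ae_restrict_iff' measurableSet_Iic).mpr (ae_of_all _ fun x hx => ?_)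
        simp only [Pi.zero_apply, Pi.sub_apply]
        exact sub_nonneg.mpr (hcmp x hx)
      · exact (Set.inter_subset_right).eventuallyLE
    linarith
  have step4 : ∫ x in Set.Iic m, (gaussianPDFReal a v x - gaussianPDFReal b v x)
      = (gaussianReal a v (Set.Iic m)).toReal - (gaussianReal b v (Set.Iic m)).toReal := by
    rw [integral_sub (hInt a _) (hInt b _), htoReal, htoReal]
  have step5 : gaussianReal b v (Set.Iic m) = gaussianReal a v (Set.Iic c) := by
    have hmap : Measure.map (· + (b-a)) (gaussianReal a v) = gaussianReal b v := by
      rw [gaussianReal_map_add_const]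
      congr 1
      ring
    rw [← hmap, Measure.map_apply (measurable_add_const _) measurableSet_Iic]
    congr 1
    ext x
    simp only [Set.mem_preimage, Set.mem_Iic, hc]
    constructor <;> intro <;> linarith
  have step6 : (gaussianReal a v (Set.Iic m)).toReal - (gaussianReal a v (Set.Iic c)).toReal
      = (gaussianReal a v (Set.Ioc c m)).toReal := by
    have hsplit : gaussianReal a v (Set.Iic m)
        = gaussianReal a v (Set.Iic c) + gaussianReal a v (Set.Ioc c m) := by
      rw [← measure_union (Set.Iic_disjoint_Ioc le_rfl) measurableSet_Ioc,
        Set.Iic_union_Ioc_eq_Iic hcm]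
    rw [hsplit, ENNReal.toReal_add (measure_ne_top _ _) (measure_ne_top _ _)]
    ring
  have step7 : (gaussianReal a v (Set.Ioc c m)).toReal ≤ (b - a) / (2*σ) := by
    rw [htoReal]
    calc ∫ x in Set.Ioc c m, gaussianPDFReal a v x
        ≤ ∫ _x in Set.Ioc c m, (2*σ)⁻¹ := by
          apply setIntegral_mono_on (hInt a _)
            (integrableOn_const measure_Ioc_lt_top.ne) measurableSet_Ioc
          exact fun x _ => hbd x
      _ = (volume (Set.Ioc c m)).toReal * (2*σ)⁻¹ := by rw [setIntegral_const]; rfl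
      _ = (b - a) / (2*σ) := by
          rw [Real.volume_Ioc, ENNReal.toReal_ofReal (by linarith)]
          rw [hc]
          ring
  have step5' : (gaussianReal b v (Set.Iic m)).toReal
      = (gaussianReal a v (Set.Iic c)).toReal := by rw [step5]
  linarith

lemma gauss_shift_abs {σ : ℝ} (hσ : 0 < σ) (a b : ℝ) {A : Set ℝ} (hA : MeasurableSet A) :
    |(gaussianReal a (σ^2).toNNReal A).toReal - (gaussianReal b (σ^2).toNNReal A).toReal|
      ≤ |a - b| / (2*σ) := by
  wlog hab : a ≤ b with H
  · have := H hσ b a hA (le_of_not_ge hab)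
    rwa [abs_sub_comm, abs_sub_comm b a] at this
  have hcompl : ∀ c : ℝ, (gaussianReal c (σ^2).toNNReal Aᶜ).toReal
      = 1 - (gaussianReal c (σ^2).toNNReal A).toReal := by
    intro c
    rw [prob_compl_eq_one_sub hA, ENNReal.toReal_sub_of_le prob_le_one ENNReal.one_ne_top,
      ENNReal.toReal_one]
  have h1 := gauss_shift_one hσ a b hab hA
  have h2 := gauss_shift_one hσ a b hab hA.compl
  rw [hcompl a, hcompl b] at h2
  rw [abs_sub_comm a b, abs_of_nonneg (sub_nonneg.mpr hab), abs_le]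
  constructor <;> linarith

theorem tv_phi_nn (d : ℕ) (R : ℕ) (hR : 0 < R) (γ : ℝ) (hγ : 0 < γ) (σ : ℝ) (hσ : 0 < σ)
    (w : Fin d → ℝ) (hw : ∑ i, w i ^ 2 = 1) :
    ∀ s : Set ((Fin d → ℝ) × ℝ), MeasurableSet s →
      |((Measure.map
            (fun p : (Fin d → ℝ) × ℝ => (p.1, phi (γ * ∑ i, w i * p.1 i) + p.2))
            ((Measure.pi fun _ : Fin d => gaussianReal 0 1).prod
              (gaussianReal 0 (Real.toNNReal (σ ^ 2))))) s).toReal -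
        ((Measure.map
            (fun p : (Fin d → ℝ) × ℝ => (p.1, nn R (γ * ∑ i, w i * p.1 i) + p.2))
            ((Measure.pi fun _ : Fin d => gaussianReal 0 1).prod
              (gaussianReal 0 (Real.toNNReal (σ ^ 2))))) s).toReal|
        ≤ 1 / (4 * σ) * (gaussianReal 0 1 {y : ℝ | R / γ ≤ |y|}).toReal := by
  intro s hs
  set μ := (Measure.pi fun _ : Fin d => gaussianReal 0 1) with hμ
  set v := Real.toNNReal (σ ^ 2) with hv
  -- measurability
  have hlin_m : Measurable (fun x : Fin d → ℝ => ∑ i, w i * x i) := by fun_prop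
  have hphi_m : Measurable phi := by
    have h1 : Measurable (fun x : ℝ => (⌊x - 1/4⌋ : ℝ)) :=
      measurable_from_top.comp (measurable_id.sub_const _).floor
    unfold phi
    exact (((measurable_id.sub_const _).sub h1).abs).sub_const _
  have hnn_m : Measurable (nn R) := by
    unfold nn
    fun_prop
  have hf1_m : Measurable (fun x : Fin d → ℝ => phi (γ * ∑ i, w i * x i)) :=
    hphi_m.comp (hlin_m.const_mul γ)
  have hf2_m : Measurable (fun x : Fin d → ℝ => nn R (γ * ∑ i, w i * x i)) :=
    hnn_m.comp (hlin_m.const_mul γ)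
  -- disintegration
  have key : ∀ f : (Fin d → ℝ) → ℝ, Measurable f →
      ((μ.prod (gaussianReal 0 v)).map
          (fun p : (Fin d → ℝ) × ℝ => (p.1, f p.1 + p.2))) s
        = ∫⁻ x, gaussianReal (f x) v (Prod.mk x ⁻¹' s) ∂μ := by
    intro f hf
    have hFm : Measurable (fun p : (Fin d → ℝ) × ℝ => (p.1, f p.1 + p.2)) :=
      measurable_fst.prodMk ((hf.comp measurable_fst).add measurable_snd)
    rw [Measure.map_apply hFm hs, Measure.prod_apply (hFm hs)]
    refine lintegral_congr fun x => ?_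
    have hsec : (Prod.mk x ⁻¹' ((fun p : (Fin d → ℝ) × ℝ => (p.1, f p.1 + p.2)) ⁻¹' s))
        = (fun y => f x + y) ⁻¹' (Prod.mk x ⁻¹' s) := rfl
    rw [hsec, ← Measure.map_apply (measurable_const_add (f x)) (measurable_prodMk_left hs),
      gaussianReal_map_const_add, zero_add]
  have hk1 := key _ hf1_m
  have hk2 := key _ hf2_m
  rw [hk1, hk2]
  -- the exceptional set
  set E : Set (Fin d → ℝ) := {x | (R:ℝ) / γ ≤ |∑ i, w i * x i|} with hE
  have hSy : MeasurableSet {y : ℝ | (R:ℝ) / γ ≤ |y|} :=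
    measurableSet_le measurable_const continuous_abs.measurable
  have hE_m : MeasurableSet E := hlin_m hSy
  set c : ENNReal := ENNReal.ofReal (1 / (4 * σ)) with hc
  set G1 : (Fin d → ℝ) → ENNReal := fun x => gaussianReal (phi (γ * ∑ i, w i * x i)) v
    (Prod.mk x ⁻¹' s) with hG1
  set G2 : (Fin d → ℝ) → ENNReal := fun x => gaussianReal (nn R (γ * ∑ i, w i * x i)) v
    (Prod.mk x ⁻¹' s) with hG2
  -- pointwise bounds
  have hpt : ∀ x, G1 x ≤ G2 x + E.indicator (fun _ => c) x
      ∧ G2 x ≤ G1 x + E.indicator (fun _ => c) x := by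
    intro x
    set t : ℝ := γ * ∑ i, w i * x i with ht
    by_cases hcase : |t| ≤ R
    · have heq : nn R t = phi t := nn_eq_phi R t hcase
      constructor
      · simp only [hG1, hG2, ← ht, heq]
        exact le_self_add
      · simp only [hG1, hG2, ← ht, heq]
        exact le_self_add
    · push_neg at hcase
      have hxE : x ∈ E := by
        rw [hE, Set.mem_setOf_eq]
        rw [div_le_iff₀ hγ]
        have : |t| = |∑ i, w i * x i| * γ := by
          rw [ht, abs_mul, abs_of_pos hγ]; ring
        linarith [this ▸ le_of_lt hcase]
      have hind : E.indicator (fun _ => c) x = c := Set.indicator_of_mem hxE _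
      have hzero : nn R t = 0 := nn_eq_zero R t (le_of_lt hcase)
      have hshift := gauss_shift_abs hσ (phi t) (nn R t) (measurable_prodMk_left (x := x) hs)
      have hdiff : |phi t - nn R t| / (2*σ) ≤ 1 / (4*σ) := by
        rw [hzero, sub_zero]
        have := phi_abs_le t
        rw [div_le_div_iff₀ (by positivity) (by positivity)]
        nlinarith
      have habs : |(G1 x).toReal - (G2 x).toReal| ≤ 1 / (4*σ) := le_trans hshift hdiff
      have hfin1 : G1 x ≠ ⊤ := measure_ne_top _ _
      have hfin2 : G2 x ≠ ⊤ := measure_ne_top _ _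
      rw [abs_le] at habs
      constructor
      · rw [hind]
        calc G1 x = ENNReal.ofReal (G1 x).toReal := (ENNReal.ofReal_toReal hfin1).symm
          _ ≤ ENNReal.ofReal ((G2 x).toReal + 1 / (4*σ)) := by
              apply ENNReal.ofReal_le_ofReal; linarith [habs.2]
          _ ≤ ENNReal.ofReal (G2 x).toReal + ENNReal.ofReal (1 / (4*σ)) :=
              ENNReal.ofReal_add_le
          _ = G2 x + c := by rw [ENNReal.ofReal_toReal hfin2]
      · rw [hind]
        calc G2 x = ENNReal.ofReal (G2 x).toReal := (ENNReal.ofReal_toReal hfin2).symm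
          _ ≤ ENNReal.ofReal ((G1 x).toReal + 1 / (4*σ)) := by
              apply ENNReal.ofReal_le_ofReal; linarith [habs.1]
          _ ≤ ENNReal.ofReal (G1 x).toReal + ENNReal.ofReal (1 / (4*σ)) :=
              ENNReal.ofReal_add_le
          _ = G1 x + c := by rw [ENNReal.ofReal_toReal hfin1]
  -- integrate
  have hind_m : Measurable (E.indicator (fun _ : Fin d → ℝ => c)) :=
    measurable_const.indicator hE_m
  have hind_int : ∫⁻ x, E.indicator (fun _ => c) x ∂μ = c * μ E := by
    rw [lintegral_indicator hE_m, setLIntegral_const]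
  have hμE : μ E = gaussianReal 0 1 {y : ℝ | (R:ℝ) / γ ≤ |y|} := by
    have hvar : (∑ i, Real.toNNReal (w i ^ 2)) = 1 := by
      apply NNReal.coe_injective
      push_cast
      rw [Finset.sum_congr rfl fun i _ => Real.coe_toNNReal _ (sq_nonneg (w i))]
      exact hw
    have := map_sum_pi d w
    rw [hvar] at this
    rw [hE, show {x : Fin d → ℝ | (R:ℝ)/γ ≤ |∑ i, w i * x i|}
      = (fun x : Fin d → ℝ => ∑ i, w i * x i) ⁻¹' {y : ℝ | (R:ℝ)/γ ≤ |y|} from rfl,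
      ← Measure.map_apply hlin_m hSy, this]
  have hle1 : ∫⁻ x, G1 x ∂μ ≤ ∫⁻ x, G2 x ∂μ + c * μ E := by
    calc ∫⁻ x, G1 x ∂μ ≤ ∫⁻ x, (G2 x + E.indicator (fun _ => c) x) ∂μ :=
          lintegral_mono fun x => (hpt x).1
      _ = ∫⁻ x, G2 x ∂μ + ∫⁻ x, E.indicator (fun _ => c) x ∂μ :=
          lintegral_add_right _ hind_m
      _ = ∫⁻ x, G2 x ∂μ + c * μ E := by rw [hind_int]
  have hle2 : ∫⁻ x, G2 x ∂μ ≤ ∫⁻ x, G1 x ∂μ + c * μ E := by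
    calc ∫⁻ x, G2 x ∂μ ≤ ∫⁻ x, (G1 x + E.indicator (fun _ => c) x) ∂μ :=
          lintegral_mono fun x => (hpt x).2
      _ = ∫⁻ x, G1 x ∂μ + ∫⁻ x, E.indicator (fun _ => c) x ∂μ :=
          lintegral_add_right _ hind_m
      _ = ∫⁻ x, G1 x ∂μ + c * μ E := by rw [hind_int]
  -- finiteness
  have hbound : ∀ G : (Fin d → ℝ) → ENNReal,
      (∀ x, G x ≤ 1) → ∫⁻ x, G x ∂μ ≤ 1 := by
    intro G hG
    calc ∫⁻ x, G x ∂μ ≤ ∫⁻ _x, 1 ∂μ := lintegral_mono hG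
      _ = 1 := by rw [lintegral_one, measure_univ]
  have hfin1 : ∫⁻ x, G1 x ∂μ ≠ ⊤ :=
    ne_top_of_le_ne_top ENNReal.one_ne_top (hbound G1 fun x => prob_le_one)
  have hfin2 : ∫⁻ x, G2 x ∂μ ≠ ⊤ :=
    ne_top_of_le_ne_top ENNReal.one_ne_top (hbound G2 fun x => prob_le_one)
  have hfinc : c * μ E ≠ ⊤ := ENNReal.mul_ne_top ENNReal.ofReal_ne_top (measure_ne_top _ _)
  have hrhs : (c * μ E).toReal = 1 / (4 * σ) * (gaussianReal 0 1 {y : ℝ | (R:ℝ)/γ ≤ |y|}).toReal := by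
    rw [ENNReal.toReal_mul, ENNReal.toReal_ofReal (by positivity), hμE]
  rw [← hrhs, abs_le]
  constructor
  · have := ENNReal.toReal_mono (by exact ENNReal.add_ne_top.mpr ⟨hfin1, hfinc⟩) hle2
    rw [ENNReal.toReal_add hfin1 hfinc] at this
    linarith
  · have := ENNReal.toReal_mono (by exact ENNReal.add_ne_top.mpr ⟨hfin2, hfinc⟩) hle1
    rw [ENNReal.toReal_add hfin2 hfinc] at this
    linarith
end
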